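/- The Hopf algebra dWHA is self-dual with respect to the pairing ⟨(ρ,σ), (ρ',σ')⟩ = 1 if ρ = σ' and ρ' = σ (up to renaming), and 0 otherwise; i.e., ⟨p ⊗ p', μ(p'')⟩ = ⟨m(p ⊗ p'), p''⟩ for all substitutions p, p', p''. -/

import Mathlib

open Finsupp

/-- All shuffles of two words (with multiplicity). -/
def shuffles : List ℕ → List ℕ → List (List ℕ)
  | [], t => [t]
  | s, [] => [s]
  | a :: s, b :: t =>
      ((shuffles s (b :: t)).map (a :: ·)) ++ ((shuffles (a :: s) t).map (b :: ·))

/-- Good cuts of a word: cuts into a prefix and a suffix with disjoint supports. -/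
def goodCuts (σ : List ℕ) : List (List ℕ × List ℕ) :=
  ((List.range (σ.length + 1)).map (fun i => (σ.take i, σ.drop i))).filter
    (fun c => c.1.toFinset ∩ c.2.toFinset = ∅)

/-- `invPart ρ τ` : the maximal subword of `ρ` with the support of `τ`, i.e. `p⁻¹(τ)`. -/
def invPart (ρ τ : List ℕ) : List ℕ := ρ.filter (fun a => a ∈ τ)

open Classical in
/-- The pairing on substitutions: `⟨(ρ,σ),(ρ',σ')⟩ = 1` iff, after an injective renaming
`φ` of the letters of the second substitution, `ρ = σ'` and `ρ' = σ`; otherwise `0`. -/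
noncomputable def pairDW (p q : List ℕ × List ℕ) : ℤ :=
  if ∃ φ : ℕ → ℕ, Set.InjOn φ {a | a ∈ q.1} ∧
      q.2.map φ = p.1 ∧ q.1.map φ = p.2 then 1 else 0

section helpers
lemma filter_map_comm (φ : ℕ → ℕ) (p q : ℕ → Bool) :
    ∀ (l : List ℕ), (∀ a ∈ l, q (φ a) = p a) →
      (l.filter p).map φ = (l.map φ).filter q := by
  intro l
  induction l with
  | nil => simp
  | cons a l ih =>
    intro h
    simp only [List.filter_cons, List.map_cons]
    rw [h a (by simp)]
    by_cases hp : p a = true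
    · simp [hp, ih (fun x hx => h x (by simp [hx]))]
    · simp only [Bool.not_eq_true] at hp
      simp [hp, ih (fun x hx => h x (by simp [hx]))]

lemma mem_shuffles (P : ℕ → Bool) :
    ∀ (s t γ : List ℕ), (∀ a ∈ s, P a = true) → (∀ b ∈ t, P b = false) →
      (γ ∈ shuffles s t ↔ γ.filter P = s ∧ γ.filter (fun a => !P a) = t) := by
  intro s
  induction s with
  | nil =>
    intro t γ _ ht
    simp only [shuffles, List.mem_singleton]
    constructor
    · rintro rfl
      constructor
      · exact List.filter_eq_nil_iff.mpr (by simpa using ht)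
      · exact List.filter_eq_self.mpr (by intro a ha; simp [ht a ha])
    · rintro ⟨h1, h2⟩
      rw [← h2]
      symm
      exact List.filter_eq_self.mpr (by
        intro a ha
        simp only [Bool.not_eq_true']
        by_contra hc
        have : a ∈ γ.filter P := List.mem_filter.mpr ⟨ha, by simpa using hc⟩
        rw [h1] at this; simp at this)
  | cons a s ih =>
    intro t
    induction t with
    | nil =>
      intro γ hs _
      simp only [shuffles, List.mem_singleton]
      constructor
      · rintro rfl
        constructor
        · exact List.filter_eq_self.mpr hs
        · exact List.filter_eq_nil_iff.mpr (by intro x hx; simp [hs x hx])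
      · rintro ⟨h1, h2⟩
        rw [← h1]
        symm
        exact List.filter_eq_self.mpr (by
          intro x hx
          by_contra hc
          have : x ∈ γ.filter (fun a => !P a) := List.mem_filter.mpr ⟨hx, by simpa using hc⟩
          rw [h2] at this; simp at this)
    | cons b t iht =>
      intro γ hs ht
      have ha : P a = true := hs a (by simp)
      have hb : P b = false := ht b (by simp)
      have hs' : ∀ x ∈ s, P x = true := fun x hx => hs x (by simp [hx])
      have ht' : ∀ x ∈ t, P x = false := fun x hx => ht x (by simp [hx])
      rw [shuffles]
      simp only [List.mem_append, List.mem_map]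
      constructor
      · rintro (⟨δ, hδ, rfl⟩ | ⟨δ, hδ, rfl⟩)
        · have := (ih (b :: t) δ hs' ht).mp hδ
          simp [List.filter_cons, ha, this.1, this.2]
        · have := (iht δ hs ht').mp hδ
          simp [List.filter_cons, hb, this.1, this.2]
      · rintro ⟨h1, h2⟩
        match γ with
        | [] => simp at h1
        | c :: γ' =>
          by_cases hc : P c = true
          · left
            rw [show (c::γ').filter P = c :: γ'.filter P by simp [List.filter_cons, hc]] at h1
            rw [show (c::γ').filter (fun a => !P a) = γ'.filter (fun a => !P a) by
              simp [List.filter_cons, hc]] at h2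
            simp only [List.cons.injEq] at h1
            obtain ⟨rfl, h1⟩ := h1
            exact ⟨γ', (ih (b :: t) γ' hs' ht).mpr ⟨h1, h2⟩, rfl⟩
          · right
            simp only [Bool.not_eq_true] at hc
            rw [show (c::γ').filter P = γ'.filter P by simp [List.filter_cons, hc]] at h1
            rw [show (c::γ').filter (fun a => !P a) = c :: γ'.filter (fun a => !P a) by
              simp [List.filter_cons, hc]] at h2
            simp only [List.cons.injEq] at h2
            obtain ⟨rfl, h2⟩ := h2
            exact ⟨γ', (iht γ' hs ht').mpr ⟨h1, h2⟩, rfl⟩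

lemma nodup_shuffles (P : ℕ → Bool) :
    ∀ (s t : List ℕ), (∀ a ∈ s, P a = true) → (∀ b ∈ t, P b = false) →
      (shuffles s t).Nodup := by
  intro s
  induction s with
  | nil => intro t _ _; simp [shuffles]
  | cons a s ih =>
    intro t
    induction t with
    | nil => intro _ _; simp [shuffles]
    | cons b t iht =>
      intro hs ht
      have hs' : ∀ x ∈ s, P x = true := fun x hx => hs x (by simp [hx])
      have ht' : ∀ x ∈ t, P x = false := fun x hx => ht x (by simp [hx])
      rw [shuffles]
      refine List.Nodup.append ?_ ?_ ?_
      · exact (ih (b :: t) hs' ht).map (by intro x y hxy; simpa using hxy)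
      · exact (iht hs ht').map (by intro x y hxy; simpa using hxy)
      · intro x hx hy
        simp only [List.mem_map] at hx hy
        obtain ⟨δ, _, rfl⟩ := hx
        obtain ⟨δ', _, he⟩ := hy
        injection he with h3 _
        have h1 := hs a (by simp)
        have h2 := ht b (by simp)
        rw [h3, h1] at h2
        simp at h2

lemma sum_map_zero {X : Type*} (l : List X) (f : X → ℤ) (h : ∀ x ∈ l, f x = 0) :
    (l.map f).sum = 0 :=
  List.sum_eq_zero (by intro x hx; obtain ⟨y, hy, rfl⟩ := List.mem_map.mp hx; exact h y hy)

lemma sum_map_single {X : Type*} [DecidableEq X] (l : List X) (f : X → ℤ) (x₀ : X)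
    (hn : l.Nodup) (hm : x₀ ∈ l) (h : ∀ x ∈ l, x ≠ x₀ → f x = 0) :
    (l.map f).sum = f x₀ := by
  induction l with
  | nil => simp at hm
  | cons a l ih =>
    simp only [List.map_cons, List.sum_cons]
    rcases List.mem_cons.mp hm with rfl | hm'
    · rw [sum_map_zero l f (fun x hx => h x (by simp [hx])
        (by rintro rfl; exact (List.nodup_cons.mp hn).1 hx))]
      ring
    · rw [h a (by simp) (by rintro rfl; exact (List.nodup_cons.mp hn).1 hm'),
        ih (List.nodup_cons.mp hn).2 hm' (fun x hx => h x (by simp [hx]))]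
      ring


lemma mem_goodCuts {σ : List ℕ} {c : List ℕ × List ℕ} :
    c ∈ goodCuts σ ↔ (∃ i ≤ σ.length, c = (σ.take i, σ.drop i)) ∧
      c.1.toFinset ∩ c.2.toFinset = ∅ := by
  simp only [goodCuts, List.mem_filter, List.mem_map, List.mem_range, decide_eq_true_eq]
  constructor
  · rintro ⟨⟨i, hi, rfl⟩, hg⟩
    exact ⟨⟨i, by omega, rfl⟩, hg⟩
  · rintro ⟨⟨i, hi, rfl⟩, hg⟩
    exact ⟨⟨i, by omega, rfl⟩, hg⟩

lemma nodup_goodCuts (σ : List ℕ) : (goodCuts σ).Nodup := by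
  apply List.Nodup.filter
  apply List.Nodup.map_on _ List.nodup_range
  intro i hi j hj hij
  simp only [List.mem_range] at hi hj
  have h1 : (σ.take i).length = (σ.take j).length := by rw [show σ.take i = σ.take j from congrArg Prod.fst hij]
  simp only [List.length_take] at h1
  omega

lemma pairDW_eq_one {p q : List ℕ × List ℕ}
    (h : ∃ φ : ℕ → ℕ, Set.InjOn φ {a | a ∈ q.1} ∧ q.2.map φ = p.1 ∧ q.1.map φ = p.2) :
    pairDW p q = 1 := by rw [pairDW]; exact if_pos h

lemma pairDW_eq_zero {p q : List ℕ × List ℕ}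
    (h : ¬ ∃ φ : ℕ → ℕ, Set.InjOn φ {a | a ∈ q.1} ∧ q.2.map φ = p.1 ∧ q.1.map φ = p.2) :
    pairDW p q = 0 := by rw [pairDW]; exact if_neg h

end helpers

/-- Self-duality of `dWHA`: `⟨p ⊗ p', μ(p'')⟩ = ⟨m(p ⊗ p'), p''⟩` for all basis
substitutions `p = (ρ,σ)`, `p' = (ρ',σ')` (written with disjoint supports) and
`p'' = (ρ'',σ'')`, where `μ` is the good-cut comultiplication and `m` the
concatenation/shuffle multiplication, and the pairing on tensor products is
`⟨p₁⊗p₂, q₁⊗q₂⟩ = ⟨p₁,q₁⟩⟨p₂,q₂⟩`. -/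
theorem stmt8 (ρ σ ρ' σ' ρ'' σ'' : List ℕ)
    (h : ρ.toFinset = σ.toFinset) (h' : ρ'.toFinset = σ'.toFinset)
    (h'' : ρ''.toFinset = σ''.toFinset)
    (hd : ρ.toFinset ∩ ρ'.toFinset = ∅) :
    ((goodCuts σ'').map (fun c =>
        pairDW (ρ, σ) (invPart ρ'' c.1, c.1) *
          pairDW (ρ', σ') (invPart ρ'' c.2, c.2))).sum
      = ((shuffles σ σ').map (fun γ => pairDW (ρ ++ ρ', γ) (ρ'', σ''))).sum := by
  classical
  -- membership transfer facts
  have mρσ : ∀ a : ℕ, a ∈ ρ ↔ a ∈ σ := by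
    intro a
    rw [← List.mem_toFinset, ← List.mem_toFinset (l := σ), h]
  have mρσ' : ∀ a : ℕ, a ∈ ρ' ↔ a ∈ σ' := by
    intro a
    rw [← List.mem_toFinset, ← List.mem_toFinset (l := σ'), h']
  have mρσ'' : ∀ a : ℕ, a ∈ ρ'' ↔ a ∈ σ'' := by
    intro a
    rw [← List.mem_toFinset, ← List.mem_toFinset (l := σ''), h'']
  have hdisj : ∀ a : ℕ, a ∈ ρ → a ∈ ρ' → False := by
    intro a h1 h2
    have : a ∈ ρ.toFinset ∩ ρ'.toFinset := by
      rw [Finset.mem_inter, List.mem_toFinset, List.mem_toFinset]; exact ⟨h1, h2⟩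
    rw [hd] at this; simp at this
  set P : ℕ → Bool := fun a => decide (a ∈ ρ) with hP
  have hPσ : ∀ a ∈ σ, P a = true := by intro a ha; simp [hP, (mρσ a).mpr ha]
  have hPσ' : ∀ b ∈ σ', P b = false := by
    intro b hb
    simp only [hP, decide_eq_false_iff_not]
    intro hbρ
    exact hdisj b hbρ ((mρσ' b).mpr hb)
  -- the common condition
  by_cases hC : ∃ φ : ℕ → ℕ, Set.InjOn φ {a | a ∈ ρ''} ∧ σ''.map φ = ρ ++ ρ' ∧
      (ρ''.map φ).filter P = σ ∧ (ρ''.map φ).filter (fun a => !P a) = σ'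
  · obtain ⟨φ, hinj, hcat, hfσ, hfσ'⟩ := hC
    set γ₀ := ρ''.map φ with hγ₀
    have hlen : σ''.length = ρ.length + ρ'.length := by
      have := congrArg List.length hcat
      simpa using this
    set α := σ''.take ρ.length with hα
    set β := σ''.drop ρ.length with hβ
    have hαβ : α ++ β = σ'' := List.take_append_drop _ _
    have hαρ : α.map φ = ρ := by
      rw [hα, show (σ''.take ρ.length).map φ = (σ''.map φ).take ρ.length from
        List.map_take, hcat, List.take_left]
    have hβρ' : β.map φ = ρ' := by
      rw [hβ, show (σ''.drop ρ.length).map φ = (σ''.map φ).drop ρ.length from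
        List.map_drop, hcat, List.drop_left]
    have hsubα : ∀ a ∈ α, a ∈ σ'' := fun a ha => List.take_subset _ _ ha
    have hsubβ : ∀ a ∈ β, a ∈ σ'' := fun a ha => List.drop_subset _ _ ha
    have hmemαβ : ∀ a ∈ σ'', a ∈ α ∨ a ∈ β := by
      intro a ha; rw [← hαβ, List.mem_append] at ha; exact ha
    -- a ∈ ρ'' : a ∈ α ↔ φ a ∈ ρ
    have hmem1 : ∀ a ∈ ρ'', (a ∈ α ↔ φ a ∈ ρ) := by
      intro a ha
      constructor
      · intro h1; rw [← hαρ]; exact List.mem_map_of_mem h1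
      · intro h1
        rw [← hαρ, List.mem_map] at h1
        obtain ⟨x, hx, hxa⟩ := h1
        have : x = a := hinj ((mρσ'' x).mpr (hsubα x hx)) ha hxa
        rwa [← this]
    have hmem2 : ∀ a ∈ ρ'', (a ∈ β ↔ φ a ∈ ρ') := by
      intro a ha
      constructor
      · intro h1; rw [← hβρ']; exact List.mem_map_of_mem h1
      · intro h1
        rw [← hβρ', List.mem_map] at h1
        obtain ⟨x, hx, hxa⟩ := h1
        have : x = a := hinj ((mρσ'' x).mpr (hsubβ x hx)) ha hxa
        rwa [← this]
    have hgood : α.toFinset ∩ β.toFinset = ∅ := by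
      rw [Finset.eq_empty_iff_forall_notMem]
      intro x hx
      rw [Finset.mem_inter, List.mem_toFinset, List.mem_toFinset] at hx
      have hxρ'' : x ∈ ρ'' := (mρσ'' x).mpr (hsubα x hx.1)
      exact hdisj _ ((hmem1 x hxρ'').mp hx.1) ((hmem2 x hxρ'').mp hx.2)
    set c₀ : List ℕ × List ℕ := (α, β) with hc₀
    have hc₀mem : c₀ ∈ goodCuts σ'' :=
      mem_goodCuts.mpr ⟨⟨ρ.length, by omega, rfl⟩, hgood⟩
    -- LHS = 1
    have hLHS : ((goodCuts σ'').map (fun c =>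
        pairDW (ρ, σ) (invPart ρ'' c.1, c.1) *
          pairDW (ρ', σ') (invPart ρ'' c.2, c.2))).sum = 1 := by
      rw [sum_map_single _ _ c₀ (nodup_goodCuts σ'') hc₀mem ?_]
      · -- f c₀ = 1
        have e1 : pairDW (ρ, σ) (invPart ρ'' c₀.1, c₀.1) = 1 := by
          apply pairDW_eq_one
          refine ⟨φ, ?_, hαρ, ?_⟩
          · apply hinj.mono
            intro a ha
            simp only [invPart, Set.mem_setOf_eq, List.mem_filter] at ha ⊢
            exact ha.1
          · show (invPart ρ'' α).map φ = σ
            rw [invPart, filter_map_comm φ _ P ρ'' ?_, hfσ]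
            intro a ha
            simp only [hP, decide_eq_decide]
            exact (hmem1 a ha).symm
        have e2 : pairDW (ρ', σ') (invPart ρ'' c₀.2, c₀.2) = 1 := by
          apply pairDW_eq_one
          refine ⟨φ, ?_, hβρ', ?_⟩
          · apply hinj.mono
            intro a ha
            simp only [invPart, Set.mem_setOf_eq, List.mem_filter] at ha ⊢
            exact ha.1
          · show (invPart ρ'' β).map φ = σ'
            rw [invPart, filter_map_comm φ _ (fun a => !P a) ρ'' ?_, hfσ']
            intro a ha
            rcases hmemαβ a ((mρσ'' a).mp ha) with haα | haβ
            · have e1 : φ a ∈ ρ := (hmem1 a ha).mp haα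
              have e2 : a ∉ β := fun hb => hdisj _ e1 ((hmem2 a ha).mp hb)
              simp [hP, e1, e2]
            · have e1 : φ a ∉ ρ := fun hc' => hdisj _ hc' ((hmem2 a ha).mp haβ)
              simp [hP, e1, haβ]
        rw [e1, e2]; norm_num
      · -- other cuts vanish
        intro c hc hne
        obtain ⟨⟨i, hi, rfl⟩, -⟩ := mem_goodCuts.mp hc
        have hine : i ≠ ρ.length := by
          rintro rfl; exact hne rfl
        have : pairDW (ρ, σ) (invPart ρ'' (σ''.take i), σ''.take i) = 0 := by
          apply pairDW_eq_zero
          rintro ⟨ψ, -, h2, -⟩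
          have := congrArg List.length h2
          simp only [List.length_map, List.length_take] at this
          omega
        rw [this, zero_mul]
    -- RHS = 1
    have hγ₀mem : γ₀ ∈ shuffles σ σ' :=
      (mem_shuffles P σ σ' γ₀ hPσ hPσ').mpr ⟨hfσ, hfσ'⟩
    have hRHS : ((shuffles σ σ').map (fun γ => pairDW (ρ ++ ρ', γ) (ρ'', σ''))).sum = 1 := by
      rw [sum_map_single _ _ γ₀ (nodup_shuffles P σ σ' hPσ hPσ') hγ₀mem ?_]
      · exact pairDW_eq_one ⟨φ, hinj, hcat, rfl⟩
      · intro γ hγ hne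
        apply pairDW_eq_zero
        rintro ⟨ψ, hinjψ, h1, h2⟩
        simp only at h1 h2
        apply hne
        rw [← h2, hγ₀]
        apply List.map_congr_left
        intro a ha
        have := List.map_eq_map_iff.mp (h1.trans hcat.symm)
        exact this a ((mρσ'' a).mp ha)
    rw [hLHS, hRHS]
  · -- condition fails : both sides are 0
    have hRHS : ((shuffles σ σ').map (fun γ => pairDW (ρ ++ ρ', γ) (ρ'', σ''))).sum = 0 := by
      apply sum_map_zero
      intro γ hγ
      apply pairDW_eq_zero
      rintro ⟨ψ, hinjψ, h1, h2⟩
      obtain ⟨hf1, hf2⟩ := (mem_shuffles P σ σ' γ hPσ hPσ').mp hγ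
      exact hC ⟨ψ, hinjψ, h1, by rw [h2]; exact hf1, by rw [h2]; exact hf2⟩
    have hLHS : ((goodCuts σ'').map (fun c =>
        pairDW (ρ, σ) (invPart ρ'' c.1, c.1) *
          pairDW (ρ', σ') (invPart ρ'' c.2, c.2))).sum = 0 := by
      apply sum_map_zero
      intro c hc
      obtain ⟨⟨i, hi, rfl⟩, hgood⟩ := mem_goodCuts.mp hc
      set α := σ''.take i with hα
      set β := σ''.drop i with hβ
      by_cases h1 : ∃ φ₁ : ℕ → ℕ, Set.InjOn φ₁ {a | a ∈ invPart ρ'' α} ∧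
          α.map φ₁ = ρ ∧ (invPart ρ'' α).map φ₁ = σ
      · by_cases h2 : ∃ φ₂ : ℕ → ℕ, Set.InjOn φ₂ {a | a ∈ invPart ρ'' β} ∧
            β.map φ₂ = ρ' ∧ (invPart ρ'' β).map φ₂ = σ'
        · exfalso
          obtain ⟨φ₁, hinj₁, hφ₁ρ, hφ₁σ⟩ := h1
          obtain ⟨φ₂, hinj₂, hφ₂ρ, hφ₂σ⟩ := h2
          have hαβ : α ++ β = σ'' := List.take_append_drop _ _
          have hsubα : ∀ a ∈ α, a ∈ σ'' := fun a ha => List.take_subset _ _ ha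
          have hsubβ : ∀ a ∈ β, a ∈ σ'' := fun a ha => List.drop_subset _ _ ha
          have hmemαβ : ∀ a ∈ σ'', a ∈ α ∨ a ∈ β := by
            intro a ha; rw [← hαβ, List.mem_append] at ha; exact ha
          have hdisjαβ : ∀ a : ℕ, a ∈ α → a ∈ β → False := by
            intro a ha hb
            have : a ∈ α.toFinset ∩ β.toFinset := by
              rw [Finset.mem_inter, List.mem_toFinset, List.mem_toFinset]; exact ⟨ha, hb⟩
            rw [hgood] at this; simp at this
          have hinvα : ∀ a ∈ α, a ∈ invPart ρ'' α := by
            intro a ha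
            rw [invPart, List.mem_filter]
            exact ⟨(mρσ'' a).mpr (hsubα a ha), by simpa using ha⟩
          have hinvβ : ∀ a ∈ β, a ∈ invPart ρ'' β := by
            intro a ha
            rw [invPart, List.mem_filter]
            exact ⟨(mρσ'' a).mpr (hsubβ a ha), by simpa using ha⟩
          set φ : ℕ → ℕ := fun a => if a ∈ α then φ₁ a else φ₂ a with hφ
          have hφα : ∀ a ∈ α, φ a = φ₁ a := by intro a ha; simp [hφ, ha]
          have hφβ : ∀ a ∈ β, φ a = φ₂ a := by
            intro a ha
            have : a ∉ α := fun hc' => hdisjαβ a hc' ha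
            simp [hφ, this]
          have hφαρ : α.map φ = ρ := by
            rw [List.map_congr_left hφα]; exact hφ₁ρ
          have hφβρ' : β.map φ = ρ' := by
            rw [List.map_congr_left hφβ]; exact hφ₂ρ
          have hmemρ : ∀ a ∈ α, φ a ∈ ρ := by
            intro a ha; rw [← hφαρ]; exact List.mem_map_of_mem ha
          have hmemρ' : ∀ a ∈ β, φ a ∈ ρ' := by
            intro a ha; rw [← hφβρ']; exact List.mem_map_of_mem ha
          apply hC
          refine ⟨φ, ?_, ?_, ?_, ?_⟩
          · intro x hx y hy hxy
            simp only [Set.mem_setOf_eq] at hx hy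
            rcases hmemαβ x ((mρσ'' x).mp hx) with hxα | hxβ <;>
              rcases hmemαβ y ((mρσ'' y).mp hy) with hyα | hyβ
            · have := hinj₁ (hinvα x hxα) (hinvα y hyα)
              rw [← hφα x hxα, ← hφα y hyα] at this
              exact this hxy
            · exfalso
              rw [hφα x hxα, hφβ y hyβ] at hxy
              apply hdisj (φ₁ x)
              · rw [← hφα x hxα]; exact hmemρ x hxα
              · rw [hxy, ← hφβ y hyβ]; exact hmemρ' y hyβ
            · exfalso
              apply hdisj (φ y) (hmemρ y hyα)
              rw [← hxy]
              exact hmemρ' x hxβ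
            · have := hinj₂ (hinvβ x hxβ) (hinvβ y hyβ)
              rw [← hφβ x hxβ, ← hφβ y hyβ] at this
              exact this hxy
          · rw [← hαβ, List.map_append, hφαρ, hφβρ']
          · rw [← filter_map_comm φ (fun a => decide (a ∈ α)) P ρ'' ?_]
            · show ((ρ''.filter fun a => decide (a ∈ α)).map φ) = σ
              have : (ρ''.filter fun a => decide (a ∈ α)) = invPart ρ'' α := by
                rw [invPart]
              rw [this, ← hφ₁σ]
              apply List.map_congr_left
              intro a ha
              rw [invPart, List.mem_filter] at ha
              exact hφα a (by simpa using ha.2)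
            · intro a ha
              simp only [hP, decide_eq_decide]
              rcases hmemαβ a ((mρσ'' a).mp ha) with haα | haβ
              · simp [haα, hmemρ a haα]
              · have hnα : a ∉ α := fun hc' => hdisjαβ a hc' haβ
                simp only [hnα, iff_false]
                intro hc'
                exact hdisj _ hc' (hmemρ' a haβ)
          · rw [← filter_map_comm φ (fun a => decide (a ∈ β)) (fun a => !P a) ρ'' ?_]
            · show ((ρ''.filter fun a => decide (a ∈ β)).map φ) = σ'
              have : (ρ''.filter fun a => decide (a ∈ β)) = invPart ρ'' β := by
                rw [invPart]
              rw [this, ← hφ₂σ]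
              apply List.map_congr_left
              intro a ha
              rw [invPart, List.mem_filter] at ha
              exact hφβ a (by simpa using ha.2)
            · intro a ha
              rcases hmemαβ a ((mρσ'' a).mp ha) with haα | haβ
              · have e1 : φ a ∈ ρ := hmemρ a haα
                have e2 : a ∉ β := fun hb => hdisjαβ a haα hb
                simp [hP, e1, e2]
              · have e1 : φ a ∉ ρ := fun hc' => hdisj _ hc' (hmemρ' a haβ)
                simp [hP, e1, haβ]
        · rw [show pairDW (ρ', σ') (invPart ρ'' β, β) = 0 from pairDW_eq_zero h2, mul_zero]
      · rw [show pairDW (ρ, σ) (invPart ρ'' α, α) = 0 from pairDW_eq_zero h1, zero_mul]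
    rw [hLHS, hRHS]
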